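/- Let n be an integer with n ≢ 0 (mod 4). Then the rank of the matrix (A₂ mod 3)^n − I over the field ℤ/3ℤ equals 2. -/
import Mathlib


/-- The coloring matrix `A_{σ₁σ₂⁻¹}` of the 3-braid `σ₁σ₂⁻¹`, reduced modulo `3`. -/
def A₂mod3 : Matrix (Fin 3) (Fin 3) (ZMod 3) := !![0, 1, 0; -2, 4, -1; -1, 2, 0]

lemma rank_eq_two_of_factor (M E F : Matrix (Fin 3) (Fin 3) (ZMod 3))
    (hE : IsUnit E.det) (hF : IsUnit F.det)
    (h : M = E * (Matrix.diagonal ![1, 1, 0] * F)) : M.rank = 2 := by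
  rw [h, Matrix.rank_mul_eq_right_of_isUnit_det _ _ hE,
      Matrix.rank_mul_eq_left_of_isUnit_det _ _ hF, Matrix.rank_diagonal]
  decide

lemma A₂mod3_pow_four : A₂mod3 ^ (4 : ℕ) = 1 := by decide

lemma A₂mod3_det_isUnit : IsUnit A₂mod3.det := by
  have h : A₂mod3.det = 1 := by decide
  rw [h]; exact isUnit_one

/-- For an integer `n` with `n ≢ 0 (mod 4)`, the rank of `(A₂ mod 3) ^ n - I`
over `ℤ/3ℤ` equals `2`. -/
theorem rank_A₂mod3_zpow_sub_one (n : ℤ) (hn : ¬ (4 : ℤ) ∣ n) :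
    (A₂mod3 ^ n - 1).rank = 2 := by
  have hdet := A₂mod3_det_isUnit
  have h4 : A₂mod3 ^ (4 : ℤ) = 1 := by
    rw [show (4 : ℤ) = ((4 : ℕ) : ℤ) by norm_num, zpow_natCast]
    exact A₂mod3_pow_four
  have key : A₂mod3 ^ n = A₂mod3 ^ (n % 4) := by
    conv_lhs => rw [← Int.emod_add_mul_ediv n 4]
    rw [Matrix.zpow_add hdet, Matrix.zpow_mul _ hdet, h4, Matrix.one_zpow, mul_one]
  have hr : n % 4 = 1 ∨ n % 4 = 2 ∨ n % 4 = 3 := by omega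
  rcases hr with h | h | h <;> rw [key, h]
  · have he : A₂mod3 ^ (1 : ℤ) = A₂mod3 ^ (1 : ℕ) := by
      rw [show (1 : ℤ) = ((1 : ℕ) : ℤ) by norm_num, zpow_natCast]
    rw [he]
    refine rank_eq_two_of_factor _ !![2,1,0;1,0,0;2,2,1] !![1,0,2;0,1,2;0,0,1] ?_ ?_ (by decide)
    · have : (!![2,1,0;1,0,0;2,2,1] : Matrix (Fin 3) (Fin 3) (ZMod 3)).det = 2 := by decide
      rw [this]; decide
    · have : (!![1,0,2;0,1,2;0,0,1] : Matrix (Fin 3) (Fin 3) (ZMod 3)).det = 1 := by decide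
      rw [this]; exact isUnit_one
  · have he : A₂mod3 ^ (2 : ℤ) = A₂mod3 ^ (2 : ℕ) := by
      rw [show (2 : ℤ) = ((2 : ℕ) : ℤ) by norm_num, zpow_natCast]
    rw [he]
    refine rank_eq_two_of_factor _ !![0,1,0;2,2,0;2,1,1] !![1,0,2;0,1,2;0,0,1] ?_ ?_ (by decide)
    · have : (!![0,1,0;2,2,0;2,1,1] : Matrix (Fin 3) (Fin 3) (ZMod 3)).det = 1 := by decide
      rw [this]; exact isUnit_one
    · have : (!![1,0,2;0,1,2;0,0,1] : Matrix (Fin 3) (Fin 3) (ZMod 3)).det = 1 := by decide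
      rw [this]; exact isUnit_one
  · have he : A₂mod3 ^ (3 : ℤ) = A₂mod3 ^ (3 : ℕ) := by
      rw [show (3 : ℤ) = ((3 : ℕ) : ℤ) by norm_num, zpow_natCast]
    rw [he]
    refine rank_eq_two_of_factor _ !![1,0,0;1,2,0;0,2,1] !![1,0,2;0,1,2;0,0,1] ?_ ?_ (by decide)
    · have : (!![1,0,0;1,2,0;0,2,1] : Matrix (Fin 3) (Fin 3) (ZMod 3)).det = 2 := by decide
      rw [this]; decide
    · have : (!![1,0,2;0,1,2;0,0,1] : Matrix (Fin 3) (Fin 3) (ZMod 3)).det = 1 := by decide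
      rw [this]; exact isUnit_one
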